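/- For every r ≥ 0 and all natural numbers m, n, λ, one has Σ_{k=0}^{r} H_{r−k}(m,n,λ)·F_k(m,n,λ) = r·F_r(m,n,λ) (the coefficient form of the identity H(m,n,λ;x)·F(m,n,λ;x) = x·∂F(m,n,λ;x)/∂x of formal power series). Equivalently, in integer form: for every r ≥ 1, f_r(m,n,λ) = Σ_{k=0}^{r−1} C(r−1,k) · h_{r−k}(m,n,λ) · f_k(m,n,λ), where C(r−1,k) is the binomial coefficient. -/

import Mathlib

open Finset

/-- Number of cycles of a permutation, counting fixed points as cycles of length 1. -/
def cyc {r : ℕ} (σ : Equiv.Perm (Fin r)) : ℕ :=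
  σ.cycleType.card + (Finset.univ.filter fun x => σ x = x).card

/-- A pair of permutations is transitive if the subgroup they generate acts
transitively on `Fin r`. -/
def IsTransitivePair {r : ℕ} (σ τ : Equiv.Perm (Fin r)) : Prop :=
  ∀ x y : Fin r, ∃ g ∈ Subgroup.closure ({σ, τ} : Set (Equiv.Perm (Fin r))), g x = y

/-- `f_r(m,n,λ) = Σ_{(σ,τ) ∈ S_r × S_r} m^{cyc σ} n^{cyc τ} λ^{cyc((στ)⁻¹)}`,
summed over all pairs; for `r = 0` this sum is `1`. -/
def fSum (r m n lam : ℕ) : ℕ :=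
  ∑ σ : Equiv.Perm (Fin r), ∑ τ : Equiv.Perm (Fin r),
    m ^ cyc σ * n ^ cyc τ * lam ^ cyc (σ * τ)⁻¹

open Classical in
/-- `h_r(m,n,λ)`: the same sum restricted to transitive pairs, with `h_0 = 0`. -/
noncomputable def hSum (r m n lam : ℕ) : ℕ :=
  if r = 0 then 0 else
    ∑ p ∈ Finset.univ.filter
        (fun p : Equiv.Perm (Fin r) × Equiv.Perm (Fin r) => IsTransitivePair p.1 p.2),
      m ^ cyc p.1 * n ^ cyc p.2 * lam ^ cyc (p.1 * p.2)⁻¹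

/-! ### Auxiliary definitions and lemmas -/

lemma permApplyInvSelf {γ : Type*} (f : Equiv.Perm γ) (x : γ) : f (f⁻¹ x) = x :=
  (Equiv.eq_symm_apply f).mp rfl

lemma permInvApplySelf {γ : Type*} (f : Equiv.Perm γ) (x : γ) : f⁻¹ (f x) = x :=
  Equiv.Perm.inv_eq_iff_eq.mpr rfl

section Aux

open Equiv hiding permCongrHom

set_option linter.unusedSectionVars false
set_option maxHeartbeats 1000000

variable {α β : Type*} [Fintype α] [DecidableEq α] [Fintype β] [DecidableEq β]

/-- Generalization of `cyc` to an arbitrary finite type. -/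
def cycG (σ : Equiv.Perm α) : ℕ :=
  σ.cycleType.card + (Finset.univ.filter fun x => σ x = x).card

/-- `Equiv.permCongr` as a monoid homomorphism. -/
def permCongrHom (e : α ≃ β) : Perm α →* Perm β where
  toFun := e.permCongr
  map_one' := by ext x; simp
  map_mul' σ τ := by ext x; simp

lemma permCongrHom_apply (e : α ≃ β) (σ : Perm α) (x : β) :
    permCongrHom e σ x = e (σ (e.symm x)) := rfl

lemma cycleType_permCongrHom (e : α ≃ β) (σ : Perm α) :
    (permCongrHom e σ).cycleType = σ.cycleType := by
  have : permCongrHom e σ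
      = σ.extendDomain (e.trans (Equiv.subtypeUnivEquiv (fun _ => trivial)).symm) := by
    ext x
    rw [Equiv.Perm.extendDomain_apply_subtype _ _ (trivial)]
    simp [permCongrHom_apply]
  rw [this, Equiv.Perm.cycleType_extendDomain]

lemma cycG_permCongrHom (e : α ≃ β) (σ : Perm α) : cycG (permCongrHom e σ) = cycG σ := by
  unfold cycG
  rw [cycleType_permCongrHom]
  congr 1
  apply Finset.card_bij' (fun b _ => e.symm b) (fun a _ => e a)
  · intro b hb
    simp only [mem_filter, mem_univ, true_and, permCongrHom_apply] at hb ⊢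
    simpa using congrArg e.symm (Finset.mem_filter.mp hb).2
  · intro a ha
    simp only [mem_filter, mem_univ, true_and] at ha ⊢
    simp [permCongrHom_apply, ha]
  · intros; simp
  · intros; simp

section sc
variable (p : α → Prop) [DecidablePred p] (a : Perm (Subtype p)) (c : Perm {x // ¬ p x})

lemma sc_mul : Equiv.Perm.subtypeCongr a c
    = Equiv.Perm.subtypeCongr a 1 * Equiv.Perm.subtypeCongr (1 : Perm (Subtype p)) c := by
  have h := (Equiv.Perm.subtypeCongrHom p).map_mul (a, 1) (1, c)
  simpa [Prod.mk_mul_mk, Equiv.Perm.subtypeCongrHom] using h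

lemma sc_left_cycleType :
    (Equiv.Perm.subtypeCongr a (1 : Perm {x // ¬ p x})).cycleType = a.cycleType := by
  have : Equiv.Perm.subtypeCongr a (1 : Perm {x // ¬ p x})
      = a.extendDomain (Equiv.refl (Subtype p)) := by
    ext x
    by_cases h : p x
    · rw [Equiv.Perm.subtypeCongr.left_apply _ _ h, Equiv.Perm.extendDomain_apply_subtype _ _ h]
      simp
    · rw [Equiv.Perm.subtypeCongr.right_apply _ _ h,
        Equiv.Perm.extendDomain_apply_not_subtype _ _ h]
      simp
  rw [this, Equiv.Perm.cycleType_extendDomain]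

lemma sc_right_cycleType :
    (Equiv.Perm.subtypeCongr (1 : Perm (Subtype p)) c).cycleType = c.cycleType := by
  have : Equiv.Perm.subtypeCongr (1 : Perm (Subtype p)) c
      = c.extendDomain (Equiv.refl {x // ¬ p x}) := by
    ext x
    by_cases h : p x
    · rw [Equiv.Perm.subtypeCongr.left_apply _ _ h,
        Equiv.Perm.extendDomain_apply_not_subtype c (Equiv.refl {x // ¬ p x}) (not_not_intro h)]
      simp
    · rw [Equiv.Perm.subtypeCongr.right_apply _ _ h,
        Equiv.Perm.extendDomain_apply_subtype c (Equiv.refl {x // ¬ p x}) h]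
      simp
  rw [this, Equiv.Perm.cycleType_extendDomain]

lemma sc_disjoint : Equiv.Perm.Disjoint (Equiv.Perm.subtypeCongr a (1 : Perm {x // ¬ p x}))
    (Equiv.Perm.subtypeCongr (1 : Perm (Subtype p)) c) := by
  intro x
  by_cases h : p x
  · right; rw [Equiv.Perm.subtypeCongr.left_apply _ _ h]; rfl
  · left; rw [Equiv.Perm.subtypeCongr.right_apply _ _ h]; rfl

lemma sc_cycleType : (Equiv.Perm.subtypeCongr a c).cycleType = a.cycleType + c.cycleType := by
  rw [sc_mul, (sc_disjoint p a c).cycleType_mul, sc_left_cycleType, sc_right_cycleType]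

lemma sc_fixed : (Finset.univ.filter fun x => Equiv.Perm.subtypeCongr a c x = x).card
    = (Finset.univ.filter fun y : Subtype p => a y = y).card
      + (Finset.univ.filter fun y : {x // ¬ p x} => c y = y).card := by
  classical
  rw [← Finset.card_filter_add_card_filter_not
    (s := Finset.univ.filter fun x => Equiv.Perm.subtypeCongr a c x = x) (p := p)]
  congr 1
  · apply Finset.card_bij' (fun x hx => (⟨x, (Finset.mem_filter.mp hx).2⟩ : Subtype p))
      (fun y _ => (y : α))
    case e_a.hi =>
      intro x hx
      simp only [Finset.mem_filter, Finset.mem_univ, true_and] at hx ⊢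
      obtain ⟨hfix, hp⟩ := hx
      rw [Equiv.Perm.subtypeCongr.left_apply _ _ hp] at hfix
      exact Subtype.ext hfix
    case e_a.hj =>
      intro y hy
      simp only [Finset.mem_filter, Finset.mem_univ, true_and] at hy
      refine Finset.mem_filter.mpr ⟨Finset.mem_filter.mpr ⟨Finset.mem_univ _, ?_⟩, y.prop⟩
      rw [Equiv.Perm.subtypeCongr.left_apply _ _ y.prop]
      exact congrArg _ hy
    case e_a.left_inv => intros; rfl
    case e_a.right_inv => intros; rfl
  · apply Finset.card_bij' (fun x hx => (⟨x, (Finset.mem_filter.mp hx).2⟩ : {x // ¬ p x}))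
      (fun y _ => (y : α))
    case e_a.hi =>
      intro x hx
      simp only [Finset.mem_filter, Finset.mem_univ, true_and] at hx ⊢
      obtain ⟨hfix, hp⟩ := hx
      rw [Equiv.Perm.subtypeCongr.right_apply _ _ hp] at hfix
      exact Subtype.ext hfix
    case e_a.hj =>
      intro y hy
      simp only [Finset.mem_filter, Finset.mem_univ, true_and] at hy
      refine Finset.mem_filter.mpr ⟨Finset.mem_filter.mpr ⟨Finset.mem_univ _, ?_⟩, y.prop⟩
      rw [Equiv.Perm.subtypeCongr.right_apply _ _ y.prop]
      exact congrArg _ hy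
    case e_a.left_inv => intros; rfl
    case e_a.right_inv => intros; rfl

lemma cycG_subtypeCongr : cycG (Equiv.Perm.subtypeCongr a c) = cycG a + cycG c := by
  unfold cycG
  rw [sc_cycleType, sc_fixed, Multiset.card_add]
  ring

end sc

/-- The weight of a pair of permutations. -/
def wG (m n lam : ℕ) (q : Perm α × Perm α) : ℕ :=
  m ^ cycG q.1 * n ^ cycG q.2 * lam ^ cycG (q.1 * q.2)⁻¹

/-- Generalization of `IsTransitivePair` to an arbitrary type. -/
def IsTransPair (σ τ : Perm α) : Prop :=
  ∀ x y : α, ∃ g ∈ Subgroup.closure ({σ, τ} : Set (Perm α)), g x = y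

lemma permCongrHom_symm_comp (e : α ≃ β) (σ : Perm α) :
    permCongrHom e.symm (permCongrHom e σ) = σ := by
  ext x; simp [permCongrHom_apply]

lemma wG_permCongrHom (e : α ≃ β) (m n lam : ℕ) (q : Perm α × Perm α) :
    wG m n lam (Prod.map (permCongrHom e) (permCongrHom e) q) = wG m n lam q := by
  unfold wG
  simp only [Prod.map_fst, Prod.map_snd, ← map_mul, ← map_inv, cycG_permCongrHom]

lemma IsTransPair.map (e : α ≃ β) {σ τ : Perm α} (h : IsTransPair σ τ) :
    IsTransPair (permCongrHom e σ) (permCongrHom e τ) := by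
  intro x y
  obtain ⟨g, hg, hgx⟩ := h (e.symm x) (e.symm y)
  refine ⟨permCongrHom e g, ?_, ?_⟩
  · have himg : ({permCongrHom e σ, permCongrHom e τ} : Set (Perm β))
        = (permCongrHom e) '' {σ, τ} := by
      rw [Set.image_insert_eq, Set.image_singleton]
    rw [himg, ← MonoidHom.map_closure]
    exact Subgroup.mem_map_of_mem _ hg
  · rw [permCongrHom_apply, hgx]; simp

open Classical in
lemma sumAll_congr (e : α ≃ β) (m n lam : ℕ) :
    (∑ q : Perm α × Perm α, wG m n lam q) = ∑ q : Perm β × Perm β, wG m n lam q := by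
  apply Fintype.sum_equiv ((e.permCongr).prodCongr (e.permCongr))
  intro q
  exact (wG_permCongrHom e m n lam q).symm

open Classical in
lemma sumTrans_congr (e : α ≃ β) (m n lam : ℕ) :
    (∑ q ∈ Finset.univ.filter (fun q : Perm α × Perm α => IsTransPair q.1 q.2), wG m n lam q)
    = ∑ q ∈ Finset.univ.filter (fun q : Perm β × Perm β => IsTransPair q.1 q.2),
        wG m n lam q := by
  apply Finset.sum_bij' (fun q _ => Prod.map (permCongrHom e) (permCongrHom e) q)
    (fun q _ => Prod.map (permCongrHom e.symm) (permCongrHom e.symm) q)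
  case hi =>
    intro q hq
    simp only [Finset.mem_filter, Finset.mem_univ, true_and] at hq ⊢
    exact hq.map e
  case hj =>
    intro q hq
    simp only [Finset.mem_filter, Finset.mem_univ, true_and] at hq ⊢
    exact hq.map e.symm
  case left_neg =>
    intro q _
    ext x <;> simp [permCongrHom_apply]
  case right_neg =>
    intro q _
    ext x <;> simp [permCongrHom_apply]
  case h =>
    intro q _
    exact (wG_permCongrHom e m n lam q).symm

/-! ### Restriction and extension of closures along an invariant set -/

lemma exists_restrict (S : Finset α) (σ τ : Equiv.Perm α)
    (hσ : ∀ x, x ∈ S ↔ σ x ∈ S) (hτ : ∀ x, x ∈ S ↔ τ x ∈ S)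
    {g : Equiv.Perm α} (hg : g ∈ Subgroup.closure ({σ, τ} : Set (Equiv.Perm α))) :
    ∃ g' ∈ Subgroup.closure ({σ.subtypePerm (fun x => (hσ x).symm), τ.subtypePerm (fun x => (hτ x).symm)} :
        Set (Equiv.Perm {x // x ∈ S})),
      ∀ (x : α) (hx : x ∈ S), (g' ⟨x, hx⟩ : α) = g x := by
  induction hg using Subgroup.closure_induction with
  | mem u hu =>
    rcases hu with h | h
    · subst h
      exact ⟨Equiv.Perm.subtypePerm u (fun x => (hσ x).symm), Subgroup.subset_closure (Set.mem_insert _ _),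
        fun x hx => rfl⟩
    · rw [Set.mem_singleton_iff] at h; subst h
      exact ⟨Equiv.Perm.subtypePerm u (fun x => (hτ x).symm), Subgroup.subset_closure (Set.mem_insert_of_mem _ rfl),
        fun x hx => rfl⟩
  | one => exact ⟨1, one_mem _, fun x hx => rfl⟩
  | mul u v hu hv ihu ihv =>
    obtain ⟨g₁, hm₁, hs₁⟩ := ihu
    obtain ⟨g₂, hm₂, hs₂⟩ := ihv
    refine ⟨g₁ * g₂, mul_mem hm₁ hm₂, fun x hx => ?_⟩
    have h2 : ((g₂ ⟨x, hx⟩ : {x // x ∈ S}) : α) = v x := hs₂ x hx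
    have hvx : v x ∈ S := h2 ▸ (g₂ ⟨x, hx⟩).prop
    have : g₂ ⟨x, hx⟩ = ⟨v x, hvx⟩ := Subtype.ext h2
    rw [Equiv.Perm.mul_apply, this, Equiv.Perm.mul_apply]
    exact hs₁ (v x) hvx
  | inv u hu ihu =>
    obtain ⟨g', hm, hs⟩ := ihu
    refine ⟨g'⁻¹, inv_mem hm, fun x hx => ?_⟩
    set b := g'⁻¹ ⟨x, hx⟩ with hb
    have h1 : u (b : α) = x := by
      have h2 : ((g' b : {x // x ∈ S}) : α) = u (b : α) := hs (b : α) b.prop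
      have h3 : g' b = ⟨x, hx⟩ := permApplyInvSelf g' ⟨x, hx⟩
      rw [h3] at h2
      exact h2.symm
    rw [← h1, permInvApplySelf]

lemma mem_iff_of_closure_subtypeCongr (S : Finset α)
    (a b : Equiv.Perm {x // x ∈ S}) (c d : Equiv.Perm {x : α // ¬ x ∈ S})
    {g : Equiv.Perm α}
    (hg : g ∈ Subgroup.closure
      ({Equiv.Perm.subtypeCongr a c, Equiv.Perm.subtypeCongr b d} : Set (Equiv.Perm α)))
    (x : α) : x ∈ S ↔ g x ∈ S := by
  induction hg using Subgroup.closure_induction generalizing x with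
  | mem u hu =>
    have key : ∀ (a' : Equiv.Perm {x // x ∈ S}) (c' : Equiv.Perm {x : α // ¬ x ∈ S}) (x : α),
        x ∈ S ↔ Equiv.Perm.subtypeCongr a' c' x ∈ S := by
      intro a' c' x
      by_cases h : x ∈ S
      · rw [Equiv.Perm.subtypeCongr.left_apply _ _ h]
        exact iff_of_true h (a' ⟨x, h⟩).prop
      · rw [Equiv.Perm.subtypeCongr.right_apply _ _ h]
        exact iff_of_false h (c' ⟨x, h⟩).prop
    rcases hu with h | h
    · subst h; exact key a c x
    · rw [Set.mem_singleton_iff] at h; subst h; exact key b d x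
  | one => simp
  | mul u v hu hv ihu ihv => rw [Equiv.Perm.mul_apply]; exact (ihv x).trans (ihu (v x))
  | inv u hu ihu =>
    have := (ihu (u⁻¹ x)).symm
    rwa [permApplyInvSelf] at this

lemma exists_extend (S : Finset α)
    (a b : Equiv.Perm {x // x ∈ S}) (c d : Equiv.Perm {x : α // ¬ x ∈ S})
    {g' : Equiv.Perm {x // x ∈ S}}
    (hg' : g' ∈ Subgroup.closure ({a, b} : Set (Equiv.Perm {x // x ∈ S}))) :
    ∃ g ∈ Subgroup.closure
        ({Equiv.Perm.subtypeCongr a c, Equiv.Perm.subtypeCongr b d} : Set (Equiv.Perm α)),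
      ∀ y : {x // x ∈ S}, g (y : α) = ((g' y : {x // x ∈ S}) : α) := by
  induction hg' using Subgroup.closure_induction with
  | mem u hu =>
    rcases hu with h | h
    · subst h
      exact ⟨Equiv.Perm.subtypeCongr u c, Subgroup.subset_closure (Set.mem_insert _ _),
        fun y => by rw [Equiv.Perm.subtypeCongr.left_apply _ _ y.prop]⟩
    · rw [Set.mem_singleton_iff] at h; subst h
      exact ⟨Equiv.Perm.subtypeCongr u d, Subgroup.subset_closure (Set.mem_insert_of_mem _ rfl),
        fun y => by rw [Equiv.Perm.subtypeCongr.left_apply _ _ y.prop]⟩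
  | one => exact ⟨1, one_mem _, fun y => rfl⟩
  | mul u v hu hv ihu ihv =>
    obtain ⟨g₁, hm₁, hs₁⟩ := ihu
    obtain ⟨g₂, hm₂, hs₂⟩ := ihv
    refine ⟨g₁ * g₂, mul_mem hm₁ hm₂, fun y => ?_⟩
    rw [Equiv.Perm.mul_apply, Equiv.Perm.mul_apply, hs₂ y, hs₁ (v y)]
  | inv u hu ihu =>
    obtain ⟨g, hm, hs⟩ := ihu
    refine ⟨g⁻¹, inv_mem hm, fun y => ?_⟩
    have h1 : g ((u⁻¹ y : {x // x ∈ S}) : α) = (y : α) := by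
      rw [hs (u⁻¹ y), permApplyInvSelf]
    rw [← h1, permInvApplySelf]

end Aux

section Aux2

open Equiv

set_option linter.unusedSectionVars false
set_option maxHeartbeats 1000000

variable {α β : Type*} [Fintype α] [DecidableEq α] [Fintype β] [DecidableEq β]

open Classical in
/-- The orbit of `x0` under the subgroup generated by a pair of permutations. -/
noncomputable def orbP (x0 : α) (q : Perm α × Perm α) : Finset α :=
  Finset.univ.filter fun y =>
    ∃ g ∈ Subgroup.closure ({q.1, q.2} : Set (Perm α)), g x0 = y

lemma mem_orbP {x0 y : α} {q : Perm α × Perm α} :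
    y ∈ orbP x0 q ↔ ∃ g ∈ Subgroup.closure ({q.1, q.2} : Set (Perm α)), g x0 = y := by
  simp [orbP]

lemma self_mem_orbP {x0 : α} {q : Perm α × Perm α} : x0 ∈ orbP x0 q :=
  mem_orbP.mpr ⟨1, one_mem _, rfl⟩

lemma mem_orbP_iff_apply {x0 y : α} {q : Perm α × Perm α} {g : Perm α}
    (hg : g ∈ Subgroup.closure ({q.1, q.2} : Set (Perm α))) :
    y ∈ orbP x0 q ↔ g y ∈ orbP x0 q := by
  constructor
  · intro hy
    obtain ⟨g₀, hm, hgy⟩ := mem_orbP.mp hy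
    exact mem_orbP.mpr ⟨g * g₀, mul_mem hg hm, by rw [Equiv.Perm.mul_apply, hgy]⟩
  · intro hy
    obtain ⟨g₀, hm, hgy⟩ := mem_orbP.mp hy
    refine mem_orbP.mpr ⟨g⁻¹ * g₀, mul_mem (inv_mem hg) hm, ?_⟩
    rw [Equiv.Perm.mul_apply, hgy, permInvApplySelf]

open Classical in
/-- Restriction of a permutation to an invariant finset (junk value `1` otherwise). -/
noncomputable def resPerm (S : Finset α) (σ : Perm α) : Perm {x // x ∈ S} :=
  if h : ∀ x, x ∈ S ↔ σ x ∈ S then σ.subtypePerm (fun x => (h x).symm) else 1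

open Classical in
/-- Restriction of a permutation to the complement of an invariant finset. -/
noncomputable def resPermC (S : Finset α) (σ : Perm α) : Perm {x : α // ¬ x ∈ S} :=
  if h : ∀ x : α, ¬ x ∈ S ↔ ¬ σ x ∈ S then σ.subtypePerm (fun x => (h x).symm) else 1

lemma resPerm_eq {S : Finset α} {σ : Perm α} (h : ∀ x, x ∈ S ↔ σ x ∈ S) :
    resPerm S σ = σ.subtypePerm (fun x => (h x).symm) := by
  rw [resPerm, dif_pos h]

lemma resPermC_eq {S : Finset α} {σ : Perm α} (h : ∀ x, x ∈ S ↔ σ x ∈ S) :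
    resPermC S σ = σ.subtypePerm (fun x => not_congr (h x).symm) := by
  rw [resPermC, dif_pos (fun x => not_congr (h x))]

lemma resPerm_apply {S : Finset α} {σ : Perm α} (h : ∀ x, x ∈ S ↔ σ x ∈ S)
    (y : {x // x ∈ S}) : ((resPerm S σ) y : α) = σ y := by
  rw [resPerm_eq h]; rfl

lemma resPermC_apply {S : Finset α} {σ : Perm α} (h : ∀ x, x ∈ S ↔ σ x ∈ S)
    (y : {x : α // ¬ x ∈ S}) : ((resPermC S σ) y : α) = σ y := by
  rw [resPermC_eq h]; rfl

lemma subtypeCongr_resPerm {S : Finset α} {σ : Perm α} (h : ∀ x, x ∈ S ↔ σ x ∈ S) :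
    Equiv.Perm.subtypeCongr (resPerm S σ) (resPermC S σ) = σ := by
  ext x
  by_cases hx : x ∈ S
  · rw [Equiv.Perm.subtypeCongr.left_apply _ _ hx, resPerm_apply h]
  · rw [Equiv.Perm.subtypeCongr.right_apply _ _ hx, resPermC_apply h]

lemma subtypeCongr_mul {pr : α → Prop} [DecidablePred pr]
    (a b : Perm (Subtype pr)) (c d : Perm {x // ¬ pr x}) :
    Equiv.Perm.subtypeCongr a c * Equiv.Perm.subtypeCongr b d
      = Equiv.Perm.subtypeCongr (a * b) (c * d) :=
  ((Equiv.Perm.subtypeCongrHom pr).map_mul (a, c) (b, d)).symm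

lemma subtypeCongr_inv {pr : α → Prop} [DecidablePred pr]
    (a : Perm (Subtype pr)) (c : Perm {x // ¬ pr x}) :
    (Equiv.Perm.subtypeCongr a c)⁻¹ = Equiv.Perm.subtypeCongr a⁻¹ c⁻¹ :=
  ((Equiv.Perm.subtypeCongrHom pr).map_inv (a, c))

lemma pow_mix (m n l x1 x2 y1 y2 z1 z2 : ℕ) :
    m ^ (x1 + x2) * n ^ (y1 + y2) * l ^ (z1 + z2)
      = (m ^ x1 * n ^ y1 * l ^ z1) * (m ^ x2 * n ^ y2 * l ^ z2) := by
  rw [pow_add, pow_add, pow_add]; ring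

lemma wG_subtypeCongr (m n lam : ℕ) {S : Finset α}
    (a b : Perm {x // x ∈ S}) (c d : Perm {x : α // ¬ x ∈ S}) :
    wG m n lam (Equiv.Perm.subtypeCongr a c, Equiv.Perm.subtypeCongr b d)
      = wG m n lam (a, b) * wG m n lam (c, d) := by
  unfold wG
  rw [subtypeCongr_mul, subtypeCongr_inv, cycG_subtypeCongr, cycG_subtypeCongr,
    cycG_subtypeCongr]
  convert pow_mix m n lam (cycG a) (cycG c) (cycG b) (cycG d)
    (cycG (a * b)⁻¹) (cycG (c * d)⁻¹) using 6

open Classical in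
/-- The key fibration: the sum of weights over pairs whose orbit of `x0` is exactly `S`
factors as (transitive pairs on `S`) times (all pairs on the complement). -/
lemma fiber_sum (m n lam : ℕ) (S : Finset α) (x0 : α) (h0 : x0 ∈ S) :
    (∑ q ∈ Finset.univ.filter (fun q : Perm α × Perm α => orbP x0 q = S), wG m n lam q)
    = (∑ q ∈ Finset.univ.filter
          (fun q : Perm {x // x ∈ S} × Perm {x // x ∈ S} => IsTransPair q.1 q.2),
        wG m n lam q)
      * ∑ u : Perm {x : α // ¬ x ∈ S} × Perm {x : α // ¬ x ∈ S}, wG m n lam u := by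
  rw [Finset.sum_mul_sum]
  rw [← Finset.sum_product']
  apply Finset.sum_bij'
    (i := fun (p : Perm α × Perm α) _ =>
      ((resPerm S p.1, resPerm S p.2), (resPermC S p.1, resPermC S p.2)))
    (j := fun q _ =>
      (Equiv.Perm.subtypeCongr q.1.1 q.2.1, Equiv.Perm.subtypeCongr q.1.2 q.2.2))
  case hi =>
    intro p hp
    rw [Finset.mem_filter] at hp
    have hS : orbP x0 p = S := hp.2
    have h1 : ∀ x, x ∈ S ↔ p.1 x ∈ S := by
      intro x
      rw [← hS]
      exact mem_orbP_iff_apply (Subgroup.subset_closure (Set.mem_insert _ _))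
    have h2 : ∀ x, x ∈ S ↔ p.2 x ∈ S := by
      intro x
      rw [← hS]
      exact mem_orbP_iff_apply (Subgroup.subset_closure (Set.mem_insert_of_mem _ rfl))
    rw [Finset.mem_product]
    refine ⟨Finset.mem_filter.mpr ⟨Finset.mem_univ _, ?_⟩, Finset.mem_univ _⟩
    -- transitivity of the restricted pair
    intro u v
    have hu : (u : α) ∈ orbP x0 p := hS ▸ u.prop
    have hv : (v : α) ∈ orbP x0 p := hS ▸ v.prop
    obtain ⟨gu, hgu, hgux⟩ := mem_orbP.mp hu
    obtain ⟨gv, hgv, hgvx⟩ := mem_orbP.mp hv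
    have hmem : gv * gu⁻¹ ∈ Subgroup.closure ({p.1, p.2} : Set (Perm α)) :=
      mul_mem hgv (inv_mem hgu)
    obtain ⟨g', hm', hs'⟩ := exists_restrict S p.1 p.2 h1 h2 hmem
    refine ⟨g', ?_, ?_⟩
    · rwa [resPerm_eq h1, resPerm_eq h2]
    · have : (gv * gu⁻¹) (u : α) = (v : α) := by
        rw [Equiv.Perm.mul_apply, ← hgux, permInvApplySelf, hgvx]
      apply Subtype.ext
      rw [← this]
      exact hs' (u : α) u.prop
  case hj =>
    intro q hq
    rw [Finset.mem_product] at hq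
    have htr : IsTransPair q.1.1 q.1.2 := (Finset.mem_filter.mp hq.1).2
    refine Finset.mem_filter.mpr ⟨Finset.mem_univ _, ?_⟩
    apply Finset.Subset.antisymm
    · intro y hy
      obtain ⟨g, hg, hgy⟩ := mem_orbP.mp hy
      have := mem_iff_of_closure_subtypeCongr S q.1.1 q.1.2 q.2.1 q.2.2 hg x0
      rw [hgy] at this
      exact this.mp h0
    · intro y hy
      obtain ⟨g', hm', hs'⟩ := htr ⟨x0, h0⟩ ⟨y, hy⟩
      obtain ⟨g, hm, hs⟩ := exists_extend S q.1.1 q.1.2 q.2.1 q.2.2 hm'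
      refine mem_orbP.mpr ⟨g, hm, ?_⟩
      have := hs ⟨x0, h0⟩
      rw [hs'] at this
      exact this
  case left_neg =>
    intro p hp
    rw [Finset.mem_filter] at hp
    have hS : orbP x0 p = S := hp.2
    have h1 : ∀ x, x ∈ S ↔ p.1 x ∈ S := by
      intro x
      rw [← hS]
      exact mem_orbP_iff_apply (Subgroup.subset_closure (Set.mem_insert _ _))
    have h2 : ∀ x, x ∈ S ↔ p.2 x ∈ S := by
      intro x
      rw [← hS]
      exact mem_orbP_iff_apply (Subgroup.subset_closure (Set.mem_insert_of_mem _ rfl))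
    exact Prod.ext (subtypeCongr_resPerm h1) (subtypeCongr_resPerm h2)
  case right_neg =>
    intro q hq
    have key : ∀ (a : Perm {x // x ∈ S}) (c : Perm {x : α // ¬ x ∈ S}),
        resPerm S (Equiv.Perm.subtypeCongr a c) = a
          ∧ resPermC S (Equiv.Perm.subtypeCongr a c) = c := by
      intro a c
      have h : ∀ x, x ∈ S ↔ Equiv.Perm.subtypeCongr a c x ∈ S := by
        intro x
        by_cases hx : x ∈ S
        · rw [Equiv.Perm.subtypeCongr.left_apply _ _ hx]
          exact iff_of_true hx (a ⟨x, hx⟩).prop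
        · rw [Equiv.Perm.subtypeCongr.right_apply _ _ hx]
          exact iff_of_false hx (c ⟨x, hx⟩).prop
      constructor
      · ext y
        rw [resPerm_apply h, Equiv.Perm.subtypeCongr.left_apply _ _ y.prop]
      · ext y
        rw [resPermC_apply h, Equiv.Perm.subtypeCongr.right_apply _ _ y.prop]
    ext : 2
    · exact ((key q.1.1 q.2.1).1 : _)
    · exact ((key q.1.2 q.2.2).1 : _)
    · exact ((key q.1.1 q.2.1).2 : _)
    · exact ((key q.1.2 q.2.2).2 : _)
  case h =>
    intro p hp
    rw [Finset.mem_filter] at hp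
    have hS : orbP x0 p = S := hp.2
    have h1 : ∀ x, x ∈ S ↔ p.1 x ∈ S := by
      intro x
      rw [← hS]
      exact mem_orbP_iff_apply (Subgroup.subset_closure (Set.mem_insert _ _))
    have h2 : ∀ x, x ∈ S ↔ p.2 x ∈ S := by
      intro x
      rw [← hS]
      exact mem_orbP_iff_apply (Subgroup.subset_closure (Set.mem_insert_of_mem _ rfl))
    conv_lhs => rw [show p = (Equiv.Perm.subtypeCongr (resPerm S p.1) (resPermC S p.1),
      Equiv.Perm.subtypeCongr (resPerm S p.2) (resPermC S p.2)) from
      (Prod.ext (subtypeCongr_resPerm h1) (subtypeCongr_resPerm h2)).symm]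
    exact wG_subtypeCongr m n lam _ _ _ _

end Aux2

section Aux3

open Equiv

set_option linter.unusedSectionVars false
set_option maxHeartbeats 1000000

lemma fSum_eq (r m n lam : ℕ) :
    fSum r m n lam = ∑ q : Perm (Fin r) × Perm (Fin r), wG m n lam q := by
  rw [fSum, Fintype.sum_prod_type]
  rfl

open Classical in
lemma hSum_eq {j : ℕ} (hj : j ≠ 0) (m n lam : ℕ) :
    hSum j m n lam = ∑ q ∈ Finset.univ.filter
        (fun q : Perm (Fin j) × Perm (Fin j) => IsTransPair q.1 q.2), wG m n lam q := by
  rw [hSum, if_neg hj]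
  apply Finset.sum_congr
  · apply Finset.filter_congr
    intro q _
    constructor <;> exact fun h => h
  · intros; rfl

lemma count_lemma (r k : ℕ) (z : Fin r) (hk : k < r) :
    (Finset.univ.filter fun S : Finset (Fin r) => z ∈ S ∧ r - S.card = k).card
      = (r - 1).choose k := by
  classical
  have h1 : (Finset.univ.filter fun S : Finset (Fin r) => z ∈ S ∧ r - S.card = k)
      = Finset.univ.filter fun S : Finset (Fin r) => z ∈ S ∧ S.card = r - k := by
    apply Finset.filter_congr
    intro S _
    have hle : S.card ≤ r := by simpa using Finset.card_le_univ S
    constructor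
    · rintro ⟨h0, hc⟩
      have hpos : 0 < S.card := Finset.card_pos.mpr ⟨z, h0⟩
      exact ⟨h0, by omega⟩
    · rintro ⟨h0, hc⟩
      have hpos : 0 < S.card := Finset.card_pos.mpr ⟨z, h0⟩
      exact ⟨h0, by omega⟩
  rw [h1]
  have h2 : (Finset.univ.filter fun S : Finset (Fin r) => z ∈ S ∧ S.card = r - k).card
      = (Finset.powersetCard (r - k - 1) (Finset.univ.erase z)).card := by
    apply Finset.card_bij' (fun S _ => S.erase z) (fun T _ => insert z T)
    case hi =>
      intro S hS
      rw [Finset.mem_filter] at hS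
      obtain ⟨-, h0, hc⟩ := hS
      rw [Finset.mem_powersetCard]
      exact ⟨Finset.erase_subset_erase z (Finset.subset_univ S),
        by rw [Finset.card_erase_of_mem h0, hc]⟩
    case hj =>
      intro T hT
      rw [Finset.mem_powersetCard] at hT
      obtain ⟨hsub, hc⟩ := hT
      have hz : z ∉ T := fun h => (Finset.mem_erase.mp (hsub h)).1 rfl
      refine Finset.mem_filter.mpr ⟨Finset.mem_univ _, Finset.mem_insert_self _ _, ?_⟩
      rw [Finset.card_insert_of_notMem hz, hc]
      omega
    case left_inv =>
      intro S hS
      rw [Finset.mem_filter] at hS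
      exact Finset.insert_erase hS.2.1
    case right_inv =>
      intro T hT
      rw [Finset.mem_powersetCard] at hT
      have hz : z ∉ T := fun h => (Finset.mem_erase.mp (hT.1 h)).1 rfl
      exact Finset.erase_insert hz
  rw [h2, Finset.card_powersetCard]
  rw [Finset.card_erase_of_mem (Finset.mem_univ z), Finset.card_univ, Fintype.card_fin]
  have h3 : r - k - 1 = (r - 1) - k := by omega
  rw [h3, Nat.choose_symm (by omega : k ≤ r - 1)]

end Aux3

/-- Coefficient form of `H(m,n,λ;x) F(m,n,λ;x) = x ∂F/∂x`:
for `r ≥ 1`, `f_r = Σ_{k=0}^{r-1} C(r-1,k) h_{r-k} f_k`. -/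
theorem fSum_eq_sum_choose_hSum_fSum (r : ℕ) (hr : 1 ≤ r) (m n lam : ℕ) :
    fSum r m n lam =
      ∑ k ∈ Finset.range r, (r - 1).choose k * hSum (r - k) m n lam * fSum k m n lam := by
  classical
  have hrpos : 0 < r := hr
  set z : Fin r := ⟨0, hrpos⟩ with hzdef
  rw [fSum_eq]
  rw [← Finset.sum_fiberwise_of_maps_to
    (g := orbP z) (t := Finset.univ.filter fun S : Finset (Fin r) => z ∈ S)
    (fun q _ => Finset.mem_filter.mpr ⟨Finset.mem_univ _, self_mem_orbP⟩) (wG m n lam)]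
  have step2 : ∀ S ∈ Finset.univ.filter (fun S : Finset (Fin r) => z ∈ S),
      (∑ q ∈ Finset.univ.filter
          (fun q : Equiv.Perm (Fin r) × Equiv.Perm (Fin r) => orbP z q = S), wG m n lam q)
      = hSum S.card m n lam * fSum (r - S.card) m n lam := by
    intro S hS
    have h0 : z ∈ S := (Finset.mem_filter.mp hS).2
    rw [fiber_sum m n lam S z h0]
    congr 1
    · rw [hSum_eq (Finset.card_pos.mpr ⟨z, h0⟩).ne' m n lam]
      exact sumTrans_congr S.equivFin m n lam
    · rw [fSum_eq]
      have hcard : Sᶜ.card = r - S.card := by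
        rw [Finset.card_compl]
        simp
      exact sumAll_congr
        (((Equiv.subtypeEquivRight (fun x => (Finset.mem_compl).symm)).trans
          (Sᶜ.equivFin)).trans (finCongr hcard)) m n lam
  rw [Finset.sum_congr rfl step2]
  have hmap2 : ∀ S ∈ Finset.univ.filter (fun S : Finset (Fin r) => z ∈ S),
      r - S.card ∈ Finset.range r := by
    intro S hS
    rw [Finset.mem_range]
    have h0 : z ∈ S := (Finset.mem_filter.mp hS).2
    have : 0 < S.card := Finset.card_pos.mpr ⟨z, h0⟩
    omega
  rw [← Finset.sum_fiberwise_of_maps_to hmap2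
    (fun S => hSum S.card m n lam * fSum (r - S.card) m n lam)]
  apply Finset.sum_congr rfl
  intro k hk
  rw [Finset.mem_range] at hk
  rw [Finset.filter_filter]
  have hsummand : ∀ S ∈ Finset.univ.filter
      (fun S : Finset (Fin r) => z ∈ S ∧ r - S.card = k),
      hSum S.card m n lam * fSum (r - S.card) m n lam
        = hSum (r - k) m n lam * fSum k m n lam := by
    intro S hS
    obtain ⟨-, h0, hc⟩ := Finset.mem_filter.mp hS
    have hle : S.card ≤ r := by simpa using Finset.card_le_univ S
    have hpos : 0 < S.card := Finset.card_pos.mpr ⟨z, h0⟩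
    have h1 : S.card = r - k := by omega
    rw [h1, Nat.sub_sub_self hk.le]
  rw [Finset.sum_congr rfl hsummand, Finset.sum_const, smul_eq_mul,
    count_lemma r k z hk, mul_assoc]
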